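/- Theorem 1, first case: For the new FCT scheme with σ̃ = |a| (so that f̂^{AD}_{j+1/2}(w) = (|a|/2)·Δ_{j+1/2}w is the second-order central antidiffusive flux), let θ ∈ [0,1) and suppose λ|a| < 1/(2(1−θ)). If u and v are grid functions satisfying the θ-scheme (and additionally TV(v) < ∞ when θ > 0), then TV(v) ≤ TV(u); i.e., the new FCT algorithm without the monotone first step is TVD under the condition λ|a| < 1/(2(1−θ)). -/

import Mathlib

/-- Total variation of a grid function `u : ℤ → ℝ`, a value in `[0, ∞]`. -/
noncomputable def TV (u : ℤ → ℝ) : ENNReal :=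
  ∑' j : ℤ, ENNReal.ofReal |u (j + 1) - u j|

/-- The new FCT antidiffusive flux `f̂^{AD}_{j+1/2}(w) = (σ̃/2)·Δ_{j+1/2}w`. -/
noncomputable def fluxAD (σ : ℝ) (w : ℤ → ℝ) (j : ℤ) : ℝ :=
  σ / 2 * (w (j + 1) - w j)

/-- The limited antidiffusive flux of the new FCT:
`f̂^C_{j+1/2}(w) = S·max{0, min(S·σ̃·Δ_{j−1/2}w, |f̂^{AD}_{j+1/2}(w)|, S·σ̃·Δ_{j+3/2}w)}`
with `S = sign(f̂^{AD}_{j+1/2}(w))` (so it vanishes when the antidiffusive flux does). -/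
noncomputable def fluxC (σ : ℝ) (w : ℤ → ℝ) (j : ℤ) : ℝ :=
  Real.sign (fluxAD σ w j) *
    max 0 (min (Real.sign (fluxAD σ w j) * (σ * (w j - w (j - 1))))
      (min |fluxAD σ w j|
        (Real.sign (fluxAD σ w j) * (σ * (w (j + 2) - w (j + 1))))))

/-- The new FCT numerical flux (without the diffusive first step):
`f̂_{j+1/2}(w) = (1/2)[a(w_j + w_{j+1}) − |a|·Δ_{j+1/2}w] + f̂^C_{j+1/2}(w)`. -/
noncomputable def numFlux (a σ : ℝ) (w : ℤ → ℝ) (j : ℤ) : ℝ :=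
  (1 / 2) * (a * (w j + w (j + 1)) - |a| * (w (j + 1) - w j)) + fluxC σ w j

lemma exists_coeff {x y c : ℝ} (hc : 0 ≤ c) (h1 : 0 ≤ x * y) (h2 : |x| ≤ c * |y|) :
    ∃ β, 0 ≤ β ∧ β ≤ c ∧ x = β * y := by
  rcases eq_or_ne y 0 with hy | hy
  · refine ⟨0, le_refl 0, hc, ?_⟩
    have : |x| ≤ 0 := by simpa [hy] using h2
    have : x = 0 := abs_nonpos_iff.mp this
    simp [this]
  · refine ⟨x / y, ?_, ?_, by field_simp⟩
    · have hy2 : 0 < y * y := by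
        rcases lt_or_gt_of_ne hy with h | h
        · exact mul_pos_of_neg_of_neg h h
        · exact mul_pos h h
      have : x / y = x * y / (y * y) := by field_simp
      rw [this]
      positivity
    · have : |x / y| ≤ c := by
        rw [abs_div, div_le_iff₀ (abs_pos.mpr hy)]
        exact h2
      exact le_trans (le_abs_self _) this

lemma fluxC_center (σ : ℝ) (hσ : 0 ≤ σ) (w : ℤ → ℝ) (j : ℤ) :
    ∃ α, 0 ≤ α ∧ α ≤ σ / 2 ∧ fluxC σ w j = α * (w (j + 1) - w j) := by
  set d := w (j + 1) - w j with hd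
  set F := fluxAD σ w j with hF
  have hFd : F = σ / 2 * d := rfl
  set S := Real.sign F with hS
  set m := max 0 (min (S * (σ * (w j - w (j - 1))))
      (min |F| (S * (σ * (w (j + 2) - w (j + 1)))))) with hm
  have hm0 : 0 ≤ m := le_max_left _ _
  have hC : fluxC σ w j = S * m := rfl
  have hmF : m ≤ |F| := max_le (abs_nonneg F) (le_trans (min_le_right _ _) (min_le_left _ _))
  apply exists_coeff (by positivity)
  · -- 0 ≤ fluxC * d
    rw [hC]
    have hSd : 0 ≤ S * d := by
      rcases lt_trichotomy d 0 with h | h | h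
      · have : F < 0 ∨ F = 0 := by
          rcases eq_or_lt_of_le hσ with h'|h'
          · right; rw [hFd, ←h']; ring
          · left; rw [hFd]; nlinarith
        rcases this with h'|h'
        · rw [hS, Real.sign_of_neg h']; nlinarith
        · rw [hS, h', Real.sign_zero]; simp
      · simp [h]
      · have : 0 < F ∨ F = 0 := by
          rcases eq_or_lt_of_le hσ with h'|h'
          · right; rw [hFd, ←h']; ring
          · left; rw [hFd]; nlinarith
        rcases this with h'|h'
        · rw [hS, Real.sign_of_pos h']; nlinarith
        · rw [hS, h', Real.sign_zero]; simp
    calc (0:ℝ) ≤ m * (S * d) := mul_nonneg hm0 hSd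
    _ = S * m * d := by ring
  · -- |fluxC| ≤ σ/2 * |d|
    rw [hC, abs_mul]
    have hSle : |S| ≤ 1 := by
      rcases Real.sign_apply_eq F with h|h|h <;> rw [hS, h] <;> norm_num
    have : |F| = σ / 2 * |d| := by rw [hFd, abs_mul, abs_of_nonneg (by positivity)]
    calc |S| * |m| ≤ 1 * |m| := by
          apply mul_le_mul_of_nonneg_right hSle (abs_nonneg m)
    _ = m := by rw [one_mul, abs_of_nonneg hm0]
    _ ≤ |F| := hmF
    _ = σ / 2 * |d| := this

lemma sign_bound {s m t σ : ℝ} (hσ : 0 ≤ σ) (hs : s = -1 ∨ s = 0 ∨ s = 1)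
    (hm : 0 ≤ m) (hb : m ≤ max 0 (s * (σ * t))) :
    0 ≤ s * m * t ∧ |s * m| ≤ σ * |t| := by
  rcases hs with h | h | h <;> subst h
  · rcases le_or_gt 0 (σ * t) with h' | h'
    · have : m ≤ 0 := le_trans hb (by rw [max_eq_left (by nlinarith)]; )
      have hm0 : m = 0 := le_antisymm this hm
      simp [hm0]
      positivity
    · have ht : t < 0 := by nlinarith
      rw [neg_one_mul] at hb
      have hmb : m ≤ -(σ * t) := le_trans hb (le_of_eq (max_eq_right (by nlinarith)))
      refine ⟨by nlinarith [mul_nonneg hm (neg_nonneg.mpr ht.le)], ?_⟩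
      rw [neg_one_mul, abs_neg, abs_of_nonneg hm, abs_of_neg ht]
      nlinarith
  · simp; positivity
  · rcases le_or_gt (σ * t) 0 with h' | h'
    · have : m ≤ 0 := le_trans hb (by rw [max_eq_left (by nlinarith)])
      have hm0 : m = 0 := le_antisymm this hm
      simp [hm0]
      positivity
    · have ht : 0 < t := by nlinarith
      rw [one_mul] at hb
      have hmb : m ≤ σ * t := le_trans hb (le_of_eq (max_eq_right h'.le))
      refine ⟨by nlinarith [mul_nonneg hm ht.le], ?_⟩
      rw [one_mul, abs_of_nonneg hm, abs_of_pos ht]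
      exact hmb

lemma fluxC_left (σ : ℝ) (hσ : 0 ≤ σ) (w : ℤ → ℝ) (j : ℤ) :
    ∃ β, 0 ≤ β ∧ β ≤ σ ∧ fluxC σ w j = β * (w j - w (j - 1)) := by
  set F := fluxAD σ w j with hF
  set S := Real.sign F with hS
  set m := max 0 (min (S * (σ * (w j - w (j - 1))))
      (min |F| (S * (σ * (w (j + 2) - w (j + 1)))))) with hm
  have hm0 : 0 ≤ m := le_max_left _ _
  have hC : fluxC σ w j = S * m := rfl
  have hb : m ≤ max 0 (S * (σ * (w j - w (j - 1)))) :=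
    max_le_max le_rfl (min_le_left _ _)
  obtain ⟨h1, h2⟩ := sign_bound hσ (Real.sign_apply_eq F) hm0 hb
  rw [hC]
  exact exists_coeff hσ h1 h2

lemma fluxC_right (σ : ℝ) (hσ : 0 ≤ σ) (w : ℤ → ℝ) (j : ℤ) :
    ∃ γ, 0 ≤ γ ∧ γ ≤ σ ∧ fluxC σ w j = γ * (w (j + 2) - w (j + 1)) := by
  set F := fluxAD σ w j with hF
  set S := Real.sign F with hS
  set m := max 0 (min (S * (σ * (w j - w (j - 1))))
      (min |F| (S * (σ * (w (j + 2) - w (j + 1)))))) with hm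
  have hm0 : 0 ≤ m := le_max_left _ _
  have hC : fluxC σ w j = S * m := rfl
  have hb : m ≤ max 0 (S * (σ * (w (j + 2) - w (j + 1)))) :=
    max_le_max le_rfl (le_trans (min_le_right _ _) (min_le_right _ _))
  obtain ⟨h1, h2⟩ := sign_bound hσ (Real.sign_apply_eq F) hm0 hb
  rw [hC]
  exact exists_coeff hσ h1 h2

lemma numFlux_incr (a : ℝ) (ha : a ≠ 0) (w : ℤ → ℝ) (j : ℤ) :
    ∃ C D : ℝ, 0 ≤ C ∧ 0 ≤ D ∧ C ≤ 2 * |a| ∧ D ≤ 2 * |a| ∧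
      (0 < a → C = 0) ∧ (a < 0 → D = 0) ∧
      numFlux a |a| w j - numFlux a |a| w (j - 1) =
        -C * (w (j + 1) - w j) + D * (w j - w (j - 1)) := by
  have e1 : j - 1 + 1 = j := by ring
  have e2 : j - 1 + 2 = j + 1 := by ring
  rcases lt_or_gt_of_ne ha with hneg | hpos
  · -- a < 0
    have habs : |a| = -a := abs_of_neg hneg
    obtain ⟨α, hα0, hα1, hαe⟩ := fluxC_center |a| (abs_nonneg a) w j
    obtain ⟨γ, hγ0, hγ1, hγe⟩ := fluxC_right |a| (abs_nonneg a) w (j - 1)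
    rw [e2, e1] at hγe
    refine ⟨-a - α + γ, 0, ?_, le_refl 0, ?_, by positivity, ?_, fun _ => rfl, ?_⟩
    · rw [habs] at hα1; linarith
    · rw [habs] at hγ1; linarith
    · intro h; linarith
    · simp only [numFlux, e1]
      rw [hαe, hγe, habs]
      ring
  · -- 0 < a
    have habs : |a| = a := abs_of_pos hpos
    obtain ⟨β, hβ0, hβ1, hβe⟩ := fluxC_left |a| (abs_nonneg a) w j
    obtain ⟨α, hα0, hα1, hαe⟩ := fluxC_center |a| (abs_nonneg a) w (j - 1)
    rw [e1] at hαe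
    refine ⟨0, a + β - α, le_refl 0, ?_, by positivity, ?_, fun _ => rfl, ?_, ?_⟩
    · rw [habs] at hα1; linarith
    · rw [habs] at hβ1; linarith
    · intro h; linarith
    · simp only [numFlux, e1]
      rw [hβe, hαe, habs]
      ring

lemma abs_add_five (a b c d e : ℝ) : |a + b + c + d + e| ≤ |a| + |b| + |c| + |d| + |e| := by
  calc |a + b + c + d + e| ≤ |a + b + c + d| + |e| := abs_add_le _ _
    _ ≤ |a + b + c| + |d| + |e| := by linarith [abs_add_le (a + b + c) d]
    _ ≤ |a + b| + |c| + |d| + |e| := by linarith [abs_add_le (a + b) c]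
    _ ≤ |a| + |b| + |c| + |d| + |e| := by linarith [abs_add_le a b]

lemma abs_mul_of_nonneg' {c x : ℝ} (hc : 0 ≤ c) : |c * x| = c * |x| := by
  rw [abs_mul, abs_of_nonneg hc]

lemma ofReal_sum5_le {a0 a1 a2 a3 a4 b0 b1 b2 b3 b4 : ℝ}
    (ha0 : 0 ≤ a0) (ha1 : 0 ≤ a1) (ha2 : 0 ≤ a2) (ha3 : 0 ≤ a3) (ha4 : 0 ≤ a4)
    (h : a0 + a1 + a2 + a3 + a4 ≤ b0 + b1 + b2 + b3 + b4) :
    ENNReal.ofReal a0 + (ENNReal.ofReal a1 + (ENNReal.ofReal a2 +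
      (ENNReal.ofReal a3 + ENNReal.ofReal a4)))
    ≤ ENNReal.ofReal b0 + (ENNReal.ofReal b1 + (ENNReal.ofReal b2 +
      (ENNReal.ofReal b3 + ENNReal.ofReal b4))) := by
  calc ENNReal.ofReal a0 + (ENNReal.ofReal a1 + (ENNReal.ofReal a2 +
        (ENNReal.ofReal a3 + ENNReal.ofReal a4)))
      = ENNReal.ofReal (a0 + (a1 + (a2 + (a3 + a4)))) := by
        rw [← ENNReal.ofReal_add ha3 ha4, ← ENNReal.ofReal_add ha2 (by linarith),
          ← ENNReal.ofReal_add ha1 (by linarith), ← ENNReal.ofReal_add ha0 (by linarith)]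
    _ ≤ ENNReal.ofReal (b0 + (b1 + (b2 + (b3 + b4)))) :=
        ENNReal.ofReal_le_ofReal (by linarith)
    _ ≤ _ := by
        refine le_trans ENNReal.ofReal_add_le (add_le_add_right ?_ _)
        refine le_trans ENNReal.ofReal_add_le (add_le_add_right ?_ _)
        refine le_trans ENNReal.ofReal_add_le (add_le_add_right ?_ _)
        exact ENNReal.ofReal_add_le

/-- Theorem 1, first case: for the new FCT with `σ̃ = |a|` (second-order central
antidiffusive flux), `θ ∈ [0,1)`, and `λ|a| < 1/(2(1−θ))`, every solution `v` of the
θ-scheme starting from `u` (with `TV(v) < ∞` when `θ > 0`) satisfies `TV(v) ≤ TV(u)`. -/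
theorem newFCT_TVD_central (a lam θ : ℝ) (ha : a ≠ 0) (hlam : 0 < lam)
    (hθ0 : 0 ≤ θ) (hθ1 : θ < 1) (hCFL : lam * |a| < 1 / (2 * (1 - θ)))
    (u v : ℤ → ℝ) (hfin : 0 < θ → TV v < ⊤)
    (hscheme : ∀ j : ℤ, v j = u j
      - lam * (1 - θ) * (numFlux a |a| u j - numFlux a |a| u (j - 1))
      - lam * θ * (numFlux a |a| v j - numFlux a |a| v (j - 1))) :
    TV v ≤ TV u := by
  rcases eq_or_ne (TV u) ⊤ with htop | htop
  · rw [htop]; exact le_top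
  choose Cu Du hCu0 hDu0 hCu2 hDu2 hCup hDun hu_eq using fun j => numFlux_incr a ha u j
  choose Cv Dv hCv0 hDv0 hCv2 hDv2 hCvp hDvn hv_eq using fun j => numFlux_incr a ha v j
  set μ := lam * (1 - θ) with hμdef
  set ν := lam * θ with hνdef
  have hμ0 : 0 ≤ μ := by have : (0:ℝ) < 1 - θ := by linarith
                         positivity
  have hν0 : 0 ≤ ν := by positivity
  have hCFL2 : μ * (2 * |a|) ≤ 1 := by
    have h2θ : (0:ℝ) < 2 * (1 - θ) := by linarith
    rw [lt_div_iff₀ h2θ] at hCFL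
    have he : μ * (2 * |a|) = lam * |a| * (2 * (1 - θ)) := by rw [hμdef]; ring
    linarith
  have hsum_u : ∀ j : ℤ, Cu j + Du (j + 1) ≤ 2 * |a| := by
    intro j
    rcases lt_or_gt_of_ne ha with h | h
    · rw [hDun (j + 1) h]; simpa using hCu2 j
    · rw [hCup j h]; simpa using hDu2 (j + 1)
  have hcoef : ∀ j : ℤ, 0 ≤ 1 - μ * Cu j - μ * Du (j + 1) := by
    intro j
    have h1 : μ * (Cu j + Du (j + 1)) ≤ μ * (2 * |a|) :=
      mul_le_mul_of_nonneg_left (hsum_u j) hμ0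
    nlinarith
  -- the key incremental identity
  have key : ∀ j : ℤ, (1 + ν * Cv j + ν * Dv (j + 1)) * (v (j + 1) - v j)
      = (1 - μ * Cu j - μ * Du (j + 1)) * (u (j + 1) - u j)
        + μ * Cu (j + 1) * (u (j + 2) - u (j + 1))
        + μ * Du j * (u j - u (j - 1))
        + ν * Cv (j + 1) * (v (j + 2) - v (j + 1))
        + ν * Dv j * (v j - v (j - 1)) := by
    intro j
    have e : j + 1 - 1 = j := by ring
    have e2 : j + 1 + 1 = j + 2 := by ring
    have h1 := hscheme j
    have h2 := hscheme (j + 1)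
    have hu4 := hu_eq (j + 1)
    have hv4 := hv_eq (j + 1)
    rw [e] at h2 hu4 hv4
    rw [e2] at hu4 hv4
    linear_combination h2 - h1 - μ * hu4 + μ * hu_eq j - ν * hv4 + ν * hv_eq j
  -- the per-j real inequality
  have hineq : ∀ j : ℤ,
      |v (j + 1) - v j| + ν * Cv j * |v (j + 1) - v j| + ν * Dv (j + 1) * |v (j + 1) - v j|
        + μ * Cu j * |u (j + 1) - u j| + μ * Du (j + 1) * |u (j + 1) - u j|
      ≤ |u (j + 1) - u j| + μ * Cu (j + 1) * |u (j + 2) - u (j + 1)|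
        + μ * Du j * |u j - u (j - 1)|
        + ν * Cv (j + 1) * |v (j + 2) - v (j + 1)| + ν * Dv j * |v j - v (j - 1)| := by
    intro j
    have hpos : (0:ℝ) ≤ 1 + ν * Cv j + ν * Dv (j + 1) := by
      have := mul_nonneg hν0 (hCv0 j)
      have := mul_nonneg hν0 (hDv0 (j + 1))
      linarith
    have habs : (1 + ν * Cv j + ν * Dv (j + 1)) * |v (j + 1) - v j|
        ≤ (1 - μ * Cu j - μ * Du (j + 1)) * |u (j + 1) - u j|
          + μ * Cu (j + 1) * |u (j + 2) - u (j + 1)|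
          + μ * Du j * |u j - u (j - 1)|
          + ν * Cv (j + 1) * |v (j + 2) - v (j + 1)|
          + ν * Dv j * |v j - v (j - 1)| := by
      calc (1 + ν * Cv j + ν * Dv (j + 1)) * |v (j + 1) - v j|
          = |(1 + ν * Cv j + ν * Dv (j + 1)) * (v (j + 1) - v j)| := by
            rw [abs_mul, abs_of_nonneg hpos]
        _ = |(1 - μ * Cu j - μ * Du (j + 1)) * (u (j + 1) - u j)
              + μ * Cu (j + 1) * (u (j + 2) - u (j + 1))
              + μ * Du j * (u j - u (j - 1))
              + ν * Cv (j + 1) * (v (j + 2) - v (j + 1))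
              + ν * Dv j * (v j - v (j - 1))| := by rw [key j]
        _ ≤ |(1 - μ * Cu j - μ * Du (j + 1)) * (u (j + 1) - u j)|
              + |μ * Cu (j + 1) * (u (j + 2) - u (j + 1))|
              + |μ * Du j * (u j - u (j - 1))|
              + |ν * Cv (j + 1) * (v (j + 2) - v (j + 1))|
              + |ν * Dv j * (v j - v (j - 1))| := abs_add_five _ _ _ _ _
        _ = (1 - μ * Cu j - μ * Du (j + 1)) * |u (j + 1) - u j|
              + μ * Cu (j + 1) * |u (j + 2) - u (j + 1)|
              + μ * Du j * |u j - u (j - 1)|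
              + ν * Cv (j + 1) * |v (j + 2) - v (j + 1)|
              + ν * Dv j * |v j - v (j - 1)| := by
            rw [abs_mul_of_nonneg' (hcoef j),
              abs_mul_of_nonneg' (mul_nonneg hμ0 (hCu0 (j + 1))),
              abs_mul_of_nonneg' (mul_nonneg hμ0 (hDu0 j)),
              abs_mul_of_nonneg' (mul_nonneg hν0 (hCv0 (j + 1))),
              abs_mul_of_nonneg' (mul_nonneg hν0 (hDv0 j))]
    nlinarith [habs]
  -- ENNReal per-j inequality (with shifted indices on the right)
  have hE : ∀ j : ℤ,
      ENNReal.ofReal |v (j + 1) - v j|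
        + (ENNReal.ofReal (ν * Cv j * |v (j + 1) - v j|)
          + (ENNReal.ofReal (ν * Dv (j + 1) * |v (j + 1) - v j|)
            + (ENNReal.ofReal (μ * Cu j * |u (j + 1) - u j|)
              + ENNReal.ofReal (μ * Du (j + 1) * |u (j + 1) - u j|))))
      ≤ ENNReal.ofReal |u (j + 1) - u j|
        + (ENNReal.ofReal (μ * Cu (j + 1) * |u (j + 1 + 1) - u (j + 1)|)
          + (ENNReal.ofReal (μ * Du (j - 1 + 1) * |u (j - 1 + 1) - u (j - 1)|)
            + (ENNReal.ofReal (ν * Cv (j + 1) * |v (j + 1 + 1) - v (j + 1)|)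
              + ENNReal.ofReal (ν * Dv (j - 1 + 1) * |v (j - 1 + 1) - v (j - 1)|)))) := by
    intro j
    have e1 : j - 1 + 1 = j := by ring
    have e2 : j + 1 + 1 = j + 2 := by ring
    rw [e1, e2]
    refine ofReal_sum5_le (abs_nonneg _)
      (mul_nonneg (mul_nonneg hν0 (hCv0 j)) (abs_nonneg _))
      (mul_nonneg (mul_nonneg hν0 (hDv0 (j + 1))) (abs_nonneg _))
      (mul_nonneg (mul_nonneg hμ0 (hCu0 j)) (abs_nonneg _))
      (mul_nonneg (mul_nonneg hμ0 (hDu0 (j + 1))) (abs_nonneg _))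
      (by linarith [hineq j])
  have hsum := ENNReal.tsum_le_tsum hE
  simp only [ENNReal.tsum_add] at hsum
  -- shift identities
  have sh1 : (∑' (j : ℤ), ENNReal.ofReal (μ * Cu (j + 1) * |u (j + 1 + 1) - u (j + 1)|))
      = ∑' (j : ℤ), ENNReal.ofReal (μ * Cu j * |u (j + 1) - u j|) :=
    (Equiv.addRight (1 : ℤ)).tsum_eq
      (fun j => ENNReal.ofReal (μ * Cu j * |u (j + 1) - u j|))
  have sh2 : (∑' (j : ℤ), ENNReal.ofReal (μ * Du (j - 1 + 1) * |u (j - 1 + 1) - u (j - 1)|))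
      = ∑' (j : ℤ), ENNReal.ofReal (μ * Du (j + 1) * |u (j + 1) - u j|) :=
    (Equiv.subRight (1 : ℤ)).tsum_eq
      (fun j => ENNReal.ofReal (μ * Du (j + 1) * |u (j + 1) - u j|))
  have sh3 : (∑' (j : ℤ), ENNReal.ofReal (ν * Cv (j + 1) * |v (j + 1 + 1) - v (j + 1)|))
      = ∑' (j : ℤ), ENNReal.ofReal (ν * Cv j * |v (j + 1) - v j|) :=
    (Equiv.addRight (1 : ℤ)).tsum_eq
      (fun j => ENNReal.ofReal (ν * Cv j * |v (j + 1) - v j|))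
  have sh4 : (∑' (j : ℤ), ENNReal.ofReal (ν * Dv (j - 1 + 1) * |v (j - 1 + 1) - v (j - 1)|))
      = ∑' (j : ℤ), ENNReal.ofReal (ν * Dv (j + 1) * |v (j + 1) - v j|) :=
    (Equiv.subRight (1 : ℤ)).tsum_eq
      (fun j => ENNReal.ofReal (ν * Dv (j + 1) * |v (j + 1) - v j|))
  rw [sh1, sh2, sh3, sh4] at hsum
  simp only [TV] at htop hfin ⊢
  set KP := ∑' (j : ℤ), ENNReal.ofReal (ν * Cv j * |v (j + 1) - v j|) with hKP
  set KQ := ∑' (j : ℤ), ENNReal.ofReal (ν * Dv (j + 1) * |v (j + 1) - v j|) with hKQ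
  set KR := ∑' (j : ℤ), ENNReal.ofReal (μ * Cu j * |u (j + 1) - u j|) with hKR
  set KS := ∑' (j : ℤ), ENNReal.ofReal (μ * Du (j + 1) * |u (j + 1) - u j|) with hKS
  -- finiteness of the four auxiliary sums
  have hbound : ∀ (c : ℤ → ℝ) (m : ℝ) (w : ℤ → ℝ), 0 ≤ m → (∀ j, 0 ≤ c j) →
      (∀ j, c j ≤ m) →
      (∑' (j : ℤ), ENNReal.ofReal (c j * |w (j + 1) - w j|))
        ≤ ENNReal.ofReal m * ∑' (j : ℤ), ENNReal.ofReal |w (j + 1) - w j| := by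
    intro c m w hm hc0 hcm
    rw [← ENNReal.tsum_mul_left]
    refine ENNReal.tsum_le_tsum fun j => ?_
    rw [← ENNReal.ofReal_mul hm]
    exact ENNReal.ofReal_le_ofReal
      (mul_le_mul_of_nonneg_right (hcm j) (abs_nonneg _))
  have h2a : (0:ℝ) ≤ 2 * |a| := by positivity
  have hRne : KR ≠ ⊤ := by
    have := hbound (fun j => μ * Cu j) (μ * (2 * |a|)) u (mul_nonneg hμ0 h2a)
      (fun j => mul_nonneg hμ0 (hCu0 j))
      (fun j => mul_le_mul_of_nonneg_left (hCu2 j) hμ0)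
    simp only [mul_assoc] at this
    refine ne_top_of_le_ne_top ?_ (le_trans (le_of_eq ?_) this)
    · exact ENNReal.mul_ne_top ENNReal.ofReal_ne_top htop
    · rw [hKR]; simp only [mul_assoc]
  have hSne : KS ≠ ⊤ := by
    have := hbound (fun j => μ * Du (j + 1)) (μ * (2 * |a|)) u (mul_nonneg hμ0 h2a)
      (fun j => mul_nonneg hμ0 (hDu0 (j + 1)))
      (fun j => mul_le_mul_of_nonneg_left (hDu2 (j + 1)) hμ0)
    simp only [mul_assoc] at this
    refine ne_top_of_le_ne_top ?_ (le_trans (le_of_eq ?_) this)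
    · exact ENNReal.mul_ne_top ENNReal.ofReal_ne_top htop
    · rw [hKS]; simp only [mul_assoc]
  have hPQne : KP ≠ ⊤ ∧ KQ ≠ ⊤ := by
    rcases eq_or_lt_of_le hθ0 with hθ | hθ
    · have hν : ν = 0 := by rw [hνdef, ← hθ, mul_zero]
      constructor
      · rw [hKP]; simp [hν]
      · rw [hKQ]; simp [hν]
    · have hfv : (∑' (j : ℤ), ENNReal.ofReal |v (j + 1) - v j|) ≠ ⊤ :=
        ne_of_lt (hfin hθ)
      constructor
      · have := hbound (fun j => ν * Cv j) (ν * (2 * |a|)) v (mul_nonneg hν0 h2a)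
          (fun j => mul_nonneg hν0 (hCv0 j))
          (fun j => mul_le_mul_of_nonneg_left (hCv2 j) hν0)
        simp only [mul_assoc] at this
        refine ne_top_of_le_ne_top ?_ (le_trans (le_of_eq ?_) this)
        · exact ENNReal.mul_ne_top ENNReal.ofReal_ne_top hfv
        · rw [hKP]; simp only [mul_assoc]
      · have := hbound (fun j => ν * Dv (j + 1)) (ν * (2 * |a|)) v (mul_nonneg hν0 h2a)
          (fun j => mul_nonneg hν0 (hDv0 (j + 1)))
          (fun j => mul_le_mul_of_nonneg_left (hDv2 (j + 1)) hν0)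
        simp only [mul_assoc] at this
        refine ne_top_of_le_ne_top ?_ (le_trans (le_of_eq ?_) this)
        · exact ENNReal.mul_ne_top ENNReal.ofReal_ne_top hfv
        · rw [hKQ]; simp only [mul_assoc]
  obtain ⟨hPne, hQne⟩ := hPQne
  have hKne : KP + (KQ + (KR + KS)) ≠ ⊤ := by
    simp [ENNReal.add_eq_top, hPne, hQne, hRne, hSne]
  have hKeq : KR + (KS + (KP + KQ)) = KP + (KQ + (KR + KS)) := by ring
  rw [hKeq] at hsum
  exact (ENNReal.add_le_add_iff_right hKne).mp hsum
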